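/- Assume (H) and let σ := lim_{n→∞} n^{−1/2}(E[S_n²])^{1/2}. If σ = 0, then the sequence of random variables (S_n)_{n≥1} is bounded in L²(Ω, ℝ). -/

import Mathlib

open MeasureTheory ProbabilityTheory Filter Set
open scoped ENNReal NNReal Topology

noncomputable section

/-- Covariance of two real functions with respect to a measure. -/
def covar {Ω : Type*} [MeasurableSpace Ω] (ν : Measure Ω) (f g : Ω → ℝ) : ℝ :=
  (∫ ω, f ω * g ω ∂ν) - (∫ ω, f ω ∂ν) * (∫ ω, g ω ∂ν)

/-- The strong decorrelation hypothesis (H) of Le Borgne–Pène, for the process `X` with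
partial sums `S`, constants `C`, `M`, `r` and decorrelation coefficients `φ`. -/
def HypH {Ω : Type*} [MeasurableSpace Ω] (ν : Measure Ω)
    (X : ℕ → Ω → ℝ) (S : ℕ → Ω → ℝ) (C M r : ℝ) (φ : ℕ → ℕ → ℝ) : Prop :=
  1 ≤ C ∧ max 1 (eLpNorm (X 0) ⊤ ν).toReal ≤ M ∧ 0 ≤ r ∧
  (∀ p l, 0 ≤ φ p l ∧ φ p l ≤ 1) ∧
  (Summable fun p : ℕ => (p : ℝ) * ⨆ l : Fin (⌊(p : ℝ) / (r + 1)⌋₊ + 1), φ p (l : ℕ)) ∧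
  ∀ a b c : ℕ, a + b + c ≤ 3 →
  ∀ j k l p q s : ℕ, 1 ≤ j → j ≤ k → k ≤ l → p ≤ q → q ≤ s →
  ∀ F : ℝ × ℝ × ℝ × ℝ → ℝ, Differentiable ℝ F →
    Integrable (fun ω => F (S (j - 1) ω, X j ω, X k ω, X l ω)) ν →
    |covar ν (fun ω => F (S (j - 1) ω, X j ω, X k ω, X l ω))
        (fun ω => X (l + p) ω ^ a * X (l + q) ω ^ b * X (l + s) ω ^ c)| ≤
      C * ((∫ ω, |F (S (j - 1) ω, X j ω, X k ω, X l ω)| ∂ν)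
        + ∫ ω, ⨆ u ∈ Icc (-M) M, ⨆ v ∈ Icc (-M) M, ⨆ w ∈ Icc (-M) M, ⨆ x ∈ Icc (-M) M,
            ‖fderiv ℝ F (S (j - 1) ω + u, X j ω + v, X k ω + w, X l ω + x)‖ ∂ν)
        * φ p (s - p)

/-- Property `(P_n(A))`: Berry–Esseen type bound with constant `A` for the
normalized partial sums `S_k / √k`, `k = 1, …, n-1`. -/
def PropP {Ω : Type*} [MeasurableSpace Ω] (ν : Measure Ω)
    (S : ℕ → Ω → ℝ) (n : ℕ) (A : ℝ) : Prop :=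
  ∀ k : ℕ, 1 ≤ k → k ≤ n - 1 → ∀ x : ℝ,
    |(ν {ω | S k ω / Real.sqrt k ≤ x}).toReal
        - ((gaussianReal 0 1) (Iic x)).toReal| ≤ A / Real.sqrt k

section LBaux

variable {Ω : Type*} [MeasurableSpace Ω] {ν : Measure Ω} [IsProbabilityMeasure ν]
variable {X : ℕ → Ω → ℝ} {S : ℕ → Ω → ℝ} {C M r : ℝ} {φ : ℕ → ℕ → ℝ}

private lemma LB_int_prod (hmeas : ∀ k, Measurable (X k))
    (hbdd : ∀ k, ∀ᵐ ω ∂ν, |X k ω| ≤ M) (j k : ℕ) :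
    Integrable (fun ω => X j ω * X k ω) ν := by
  refine (integrable_const (M * M)).mono' ((hmeas j).mul (hmeas k)).aestronglyMeasurable ?_
  filter_upwards [hbdd j, hbdd k] with ω h1 h2
  have h0 : (0 : ℝ) ≤ M := le_trans (abs_nonneg _) h1
  calc ‖X j ω * X k ω‖ = |X j ω| * |X k ω| := abs_mul _ _
    _ ≤ M * M := mul_le_mul h1 h2 (abs_nonneg _) h0

private lemma LB_shift (hmeas : ∀ k, Measurable (X k))
    (hstat : ∀ i m : ℕ,
      Measure.map (fun ω => fun t : Fin m => X (i + t) ω) ν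
        = Measure.map (fun ω => fun t : Fin m => X (t : ℕ) ω) ν)
    (i s t m : ℕ) (hs : s < m) (ht : t < m) :
    ∫ ω, X (i + s) ω * X (i + t) ω ∂ν = ∫ ω, X s ω * X t ω ∂ν := by
  set g : (Fin m → ℝ) → ℝ := fun v => v ⟨s, hs⟩ * v ⟨t, ht⟩ with hgdef
  have hg : Measurable g := (measurable_pi_apply _).mul (measurable_pi_apply _)
  have h1 : Measurable (fun ω => fun u : Fin m => X (i + u) ω) :=
    measurable_pi_lambda _ fun u => hmeas _
  have h2 : Measurable (fun ω => fun u : Fin m => X (u : ℕ) ω) :=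
    measurable_pi_lambda _ fun u => hmeas _
  have e1 : ∫ v, g v ∂(Measure.map (fun ω => fun u : Fin m => X (i + u) ω) ν)
      = ∫ ω, X (i + s) ω * X (i + t) ω ∂ν := by
    rw [integral_map h1.aemeasurable hg.aestronglyMeasurable]
  have e2 : ∫ v, g v ∂(Measure.map (fun ω => fun u : Fin m => X (u : ℕ) ω) ν)
      = ∫ ω, X s ω * X t ω ∂ν := by
    rw [integral_map h2.aemeasurable hg.aestronglyMeasurable]
  rw [← e1, ← e2, hstat]

private lemma LB_gamma_eq (hmeas : ∀ k, Measurable (X k))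
    (hstat : ∀ i m : ℕ,
      Measure.map (fun ω => fun t : Fin m => X (i + t) ω) ν
        = Measure.map (fun ω => fun t : Fin m => X (t : ℕ) ω) ν)
    {j k : ℕ} (hj : 1 ≤ j) (hjk : j ≤ k) :
    ∫ ω, X j ω * X k ω ∂ν = ∫ ω, X 1 ω * X (1 + (k - j)) ω ∂ν := by
  have h := LB_shift hmeas hstat (j - 1) 1 (1 + (k - j)) (k - j + 2)
    (by omega) (by omega)
  have e1 : j - 1 + 1 = j := by omega
  have e2 : j - 1 + (1 + (k - j)) = k := by omega
  rw [e1, e2] at h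
  exact h

private lemma LB_cbound (hmeas : ∀ k, Measurable (X k))
    (hcent : ∀ k, ∫ ω, X k ω ∂ν = 0)
    (hbdd : ∀ k, ∀ᵐ ω ∂ν, |X k ω| ≤ M)
    (hH : HypH ν X S C M r φ) (p : ℕ) :
    |∫ ω, X 1 ω * X (1 + p) ω ∂ν| ≤ C * (M + 1) * φ p 0 := by
  obtain ⟨hC, hMle, hr, hφ, hsum, hcov⟩ := hH
  have hM1 : (1 : ℝ) ≤ M := le_trans (le_max_left _ _) hMle
  set L : (ℝ × ℝ × ℝ × ℝ) →L[ℝ] ℝ :=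
    (ContinuousLinearMap.fst ℝ ℝ (ℝ × ℝ)).comp (ContinuousLinearMap.snd ℝ ℝ (ℝ × ℝ × ℝ)) with hL
  have hFL : (fun t : ℝ × ℝ × ℝ × ℝ => t.2.1) = ⇑L := rfl
  have hLnorm : ‖L‖ ≤ 1 := by
    refine ContinuousLinearMap.opNorm_le_bound _ zero_le_one fun x => ?_
    rw [one_mul]
    calc ‖L x‖ = ‖x.2.1‖ := rfl
      _ ≤ ‖x.2‖ := norm_fst_le _
      _ ≤ ‖x‖ := norm_snd_le _
  have hFdiff : Differentiable ℝ (fun t : ℝ × ℝ × ℝ × ℝ => t.2.1) := by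
    rw [hFL]; exact L.differentiable
  have hint : Integrable (fun ω => X 1 ω) ν := by
    refine (integrable_const M).mono' (hmeas 1).aestronglyMeasurable ?_
    filter_upwards [hbdd 1] with ω h
    simpa using h
  have h := hcov 1 0 0 (by norm_num) 1 1 1 p p p le_rfl le_rfl le_rfl le_rfl le_rfl
    (fun t : ℝ × ℝ × ℝ × ℝ => t.2.1) hFdiff (by simpa using hint)
  simp only [pow_one, pow_zero, mul_one, Nat.sub_self] at h
  have ecov : covar ν (fun ω => X 1 ω) (fun ω => X (1 + p) ω)
      = ∫ ω, X 1 ω * X (1 + p) ω ∂ν := by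
    simp [covar, hcent]
  rw [ecov] at h
  refine le_trans h ?_
  have hφp : 0 ≤ φ p 0 := (hφ p 0).1
  refine mul_le_mul_of_nonneg_right ?_ hφp
  have hi1 : ∫ ω, |X 1 ω| ∂ν ≤ M := by
    have := integral_mono_of_nonneg (g := fun _ => M)
      (Eventually.of_forall fun ω => abs_nonneg (X 1 ω)) (integrable_const M) (hbdd 1)
    simpa using this
  have hFd : ∀ z : ℝ × ℝ × ℝ × ℝ, ‖fderiv ℝ (fun t : ℝ × ℝ × ℝ × ℝ => t.2.1) z‖ ≤ 1 := by
    intro z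
    rw [hFL, ContinuousLinearMap.fderiv]
    exact hLnorm
  have hsup_le : ∀ ω, (⨆ u ∈ Icc (-M) M, ⨆ v ∈ Icc (-M) M, ⨆ w ∈ Icc (-M) M,
      ⨆ x ∈ Icc (-M) M, ‖fderiv ℝ (fun t : ℝ × ℝ × ℝ × ℝ => t.2.1)
        (S 0 ω + u, X 1 ω + v, X 1 ω + w, X 1 ω + x)‖) ≤ 1 := by
    intro ω
    refine Real.iSup_le (fun u => Real.iSup_le (fun _ =>
      Real.iSup_le (fun v => Real.iSup_le (fun _ =>
      Real.iSup_le (fun w => Real.iSup_le (fun _ =>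
      Real.iSup_le (fun x => Real.iSup_le (fun _ => hFd _) zero_le_one)
        zero_le_one) zero_le_one) zero_le_one) zero_le_one) zero_le_one) zero_le_one) zero_le_one
  have hsup_nonneg : ∀ ω, 0 ≤ (⨆ u ∈ Icc (-M) M, ⨆ v ∈ Icc (-M) M, ⨆ w ∈ Icc (-M) M,
      ⨆ x ∈ Icc (-M) M, ‖fderiv ℝ (fun t : ℝ × ℝ × ℝ × ℝ => t.2.1)
        (S 0 ω + u, X 1 ω + v, X 1 ω + w, X 1 ω + x)‖) := by
    intro ω
    refine Real.iSup_nonneg (fun u => Real.iSup_nonneg (fun _ =>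
      Real.iSup_nonneg (fun v => Real.iSup_nonneg (fun _ =>
      Real.iSup_nonneg (fun w => Real.iSup_nonneg (fun _ =>
      Real.iSup_nonneg (fun x => Real.iSup_nonneg (fun _ => norm_nonneg _))))))))
  have hi2 : (∫ ω, ⨆ u ∈ Icc (-M) M, ⨆ v ∈ Icc (-M) M, ⨆ w ∈ Icc (-M) M,
      ⨆ x ∈ Icc (-M) M, ‖fderiv ℝ (fun t : ℝ × ℝ × ℝ × ℝ => t.2.1)
        (S 0 ω + u, X 1 ω + v, X 1 ω + w, X 1 ω + x)‖ ∂ν) ≤ 1 := by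
    have := integral_mono_of_nonneg (μ := ν) (g := fun _ => (1 : ℝ))
      (Eventually.of_forall hsup_nonneg) (integrable_const 1)
      (Eventually.of_forall hsup_le)
    simpa using this
  have hC0 : (0 : ℝ) ≤ C := le_trans zero_le_one hC
  have h3 : (∫ ω, |X 1 ω| ∂ν) + (∫ ω, ⨆ u ∈ Icc (-M) M, ⨆ v ∈ Icc (-M) M,
      ⨆ w ∈ Icc (-M) M, ⨆ x ∈ Icc (-M) M, ‖fderiv ℝ (fun t : ℝ × ℝ × ℝ × ℝ => t.2.1)
        (S 0 ω + u, X 1 ω + v, X 1 ω + w, X 1 ω + x)‖ ∂ν) ≤ M + 1 :=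
    add_le_add hi1 hi2
  exact mul_le_mul_of_nonneg_left h3 hC0

end LBaux

theorem stmt_3
    {Ω : Type*} [MeasurableSpace Ω] (ν : Measure Ω) [IsProbabilityMeasure ν]
    (X : ℕ → Ω → ℝ) (S : ℕ → Ω → ℝ) (C M r : ℝ) (φ : ℕ → ℕ → ℝ)
    (hmeas : ∀ k, Measurable (X k))
    (hcent : ∀ k, ∫ ω, X k ω ∂ν = 0)
    (hbdd : ∀ k, ∀ᵐ ω ∂ν, |X k ω| ≤ M)
    (hstat : ∀ i m : ℕ,
      Measure.map (fun ω => fun t : Fin m => X (i + t) ω) ν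
        = Measure.map (fun ω => fun t : Fin m => X (t : ℕ) ω) ν)
    (hS : ∀ n ω, S n ω = ∑ k ∈ Finset.Icc 1 n, X k ω)
    (hH : HypH ν X S C M r φ)
    (σ : ℝ)
    (hσ : Tendsto (fun n : ℕ => Real.sqrt (∫ ω, S n ω ^ 2 ∂ν) / Real.sqrt n) atTop (𝓝 σ))
    (hσ0 : σ = 0) :
    ∃ R : ℝ, ∀ n : ℕ, 1 ≤ n → ∫ ω, S n ω ^ 2 ∂ν ≤ R := by
  classical
  obtain ⟨hC, hMle, hr, hφ, hsum, -⟩ := id hH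
  have hM1 : (1 : ℝ) ≤ M := le_trans (le_max_left _ _) hMle
  set a : ℕ → ℝ := fun n => ∫ ω, S n ω ^ 2 ∂ν with ha
  set γ : ℕ → ℕ → ℝ := fun j k => ∫ ω, X j ω * X k ω ∂ν with hγ
  set c : ℕ → ℝ := fun p => γ 1 (1 + p) with hc
  set ψ : ℕ → ℝ := fun p => ⨆ l : Fin (⌊(p : ℝ) / (r + 1)⌋₊ + 1), φ p (l : ℕ) with hψ
  set K : ℝ := C * (M + 1) with hKdef
  have hK0 : 0 ≤ K := mul_nonneg (le_trans zero_le_one hC) (by linarith)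
  have hφψ : ∀ p, φ p 0 ≤ ψ p := by
    intro p
    have h := le_ciSup (f := fun l : Fin (⌊(p : ℝ) / (r + 1)⌋₊ + 1) => φ p (l : ℕ))
      (Set.Finite.bddAbove (Set.finite_range _)) ⟨0, Nat.succ_pos _⟩
    simpa [hψ] using h
  have hψ0 : ∀ p, 0 ≤ ψ p := fun p => le_trans (hφ p 0).1 (hφψ p)
  have hcb : ∀ p, |c p| ≤ K * φ p 0 := fun p => LB_cbound hmeas hcent hbdd hH p
  set B : ℝ := K * ∑' p : ℕ, (p : ℝ) * ψ p with hB
  have htnn : ∀ p : ℕ, 0 ≤ (p : ℝ) * ψ p := fun p => mul_nonneg (Nat.cast_nonneg _) (hψ0 p)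
  have hB0 : 0 ≤ B := mul_nonneg hK0 (tsum_nonneg htnn)
  have hpartial : ∀ s : Finset ℕ, ∑ p ∈ s, (p : ℝ) * |c p| ≤ B := by
    intro s
    calc ∑ p ∈ s, (p : ℝ) * |c p| ≤ ∑ p ∈ s, K * ((p : ℝ) * ψ p) := by
          refine Finset.sum_le_sum fun p _ => ?_
          calc (p : ℝ) * |c p| ≤ (p : ℝ) * (K * φ p 0) :=
                mul_le_mul_of_nonneg_left (hcb p) (Nat.cast_nonneg _)
            _ ≤ (p : ℝ) * (K * ψ p) :=
                mul_le_mul_of_nonneg_left (mul_le_mul_of_nonneg_left (hφψ p) hK0)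
                  (Nat.cast_nonneg _)
            _ = K * ((p : ℝ) * ψ p) := by ring
      _ = K * ∑ p ∈ s, (p : ℝ) * ψ p := by rw [Finset.mul_sum]
      _ ≤ B := mul_le_mul_of_nonneg_left (hsum.sum_le_tsum s (fun p _ => htnn p)) hK0
  have hInt : ∀ j k : ℕ, Integrable (fun ω => X j ω * X k ω) ν := LB_int_prod hmeas hbdd
  have haeq : ∀ n : ℕ, a n = ∑ j ∈ Finset.Icc 1 n, ∑ k ∈ Finset.Icc 1 n, γ j k := by
    intro n
    have e : ∀ ω, S n ω ^ 2 = ∑ j ∈ Finset.Icc 1 n, ∑ k ∈ Finset.Icc 1 n, X j ω * X k ω := by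
      intro ω
      rw [hS, sq, Finset.sum_mul_sum]
    rw [ha]
    simp only [e]
    rw [integral_finset_sum _ (fun j _ => integrable_finset_sum _ fun k _ => hInt j k)]
    exact Finset.sum_congr rfl fun j _ => integral_finset_sum _ fun k _ => hInt j k
  have hγsymm : ∀ j k, γ j k = γ k j := by
    intro j k
    simp only [hγ, mul_comm]
  have hγshift : ∀ n j k : ℕ, γ (j + n) (k + n) = γ j k := by
    intro n j k
    have h := LB_shift hmeas hstat n j k (j + k + 1) (by omega) (by omega)
    simpa only [hγ, add_comm n] using h
  have hγc : ∀ j k : ℕ, 1 ≤ j → j ≤ k → γ j k = c (k - j) := by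
    intro j k hj hjk
    exact LB_gamma_eq hmeas hstat hj hjk
  -- key inequality : a (2n) ≥ 2 a n - 2 B
  have key : ∀ n : ℕ, 2 * a n - 2 * B ≤ a (2 * n) := by
    intro n
    set A : Finset ℕ := Finset.Icc 1 n with hA
    set Bf : Finset ℕ := Finset.Icc (n + 1) (2 * n) with hBf
    have hA2 : Finset.Icc 1 (2 * n) = A ∪ Bf := by
      ext x
      simp only [hA, hBf, Finset.mem_union, Finset.mem_Icc]
      omega
    have hdisj : Disjoint A Bf := by
      simp only [hA, hBf, Finset.disjoint_left, Finset.mem_Icc]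
      omega
    have expand : a (2 * n) = (∑ j ∈ A, ∑ k ∈ A, γ j k) + (∑ j ∈ A, ∑ k ∈ Bf, γ j k)
        + ((∑ j ∈ Bf, ∑ k ∈ A, γ j k) + (∑ j ∈ Bf, ∑ k ∈ Bf, γ j k)) := by
      rw [haeq (2 * n), hA2, Finset.sum_union hdisj]
      simp only [Finset.sum_union hdisj]
      rw [Finset.sum_add_distrib, Finset.sum_add_distrib]
    have hblock : ∑ j ∈ Bf, ∑ k ∈ Bf, γ j k = ∑ j ∈ A, ∑ k ∈ A, γ j k := by
      have hBmap : Bf = Finset.map (addRightEmbedding n) A := by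
        rw [hA, hBf, Finset.map_add_right_Icc]
        congr 1 <;> omega
      rw [hBmap, Finset.sum_map]
      refine Finset.sum_congr rfl fun j _ => ?_
      rw [Finset.sum_map]
      refine Finset.sum_congr rfl fun k _ => ?_
      exact hγshift n j k
    have hsym : ∑ j ∈ Bf, ∑ k ∈ A, γ j k = ∑ j ∈ A, ∑ k ∈ Bf, γ j k := by
      rw [Finset.sum_comm]
      exact Finset.sum_congr rfl fun j _ => Finset.sum_congr rfl fun k _ => hγsymm k j
    have hcross : |∑ j ∈ A, ∑ k ∈ Bf, γ j k| ≤ B := by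
      have e1 : ∑ j ∈ A, ∑ k ∈ Bf, γ j k = ∑ x ∈ A ×ˢ Bf, γ x.1 x.2 := by
        rw [Finset.sum_product']
      rw [e1]
      calc |∑ x ∈ A ×ˢ Bf, γ x.1 x.2| ≤ ∑ x ∈ A ×ˢ Bf, |γ x.1 x.2| :=
            Finset.abs_sum_le_sum_abs _ _
        _ = ∑ p ∈ Finset.Icc 1 (2 * n), ∑ x ∈ (A ×ˢ Bf).filter (fun x => x.2 - x.1 = p),
              |γ x.1 x.2| := by
            refine (Finset.sum_fiberwise_of_maps_to ?_ _).symm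
            intro x hx
            simp only [hA, hBf, Finset.mem_product, Finset.mem_Icc] at hx
            simp only [Finset.mem_Icc]
            omega
        _ ≤ ∑ p ∈ Finset.Icc 1 (2 * n), (p : ℝ) * |c p| := by
            refine Finset.sum_le_sum fun p _ => ?_
            have hval : ∀ x ∈ (A ×ˢ Bf).filter (fun x => x.2 - x.1 = p),
                |γ x.1 x.2| = |c p| := by
              intro x hx
              simp only [hA, hBf, Finset.mem_filter, Finset.mem_product,
                Finset.mem_Icc] at hx
              rw [hγc x.1 x.2 hx.1.1.1 (by omega), hx.2]
            rw [Finset.sum_congr rfl hval, Finset.sum_const, nsmul_eq_mul]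
            have hcard : ((A ×ˢ Bf).filter (fun x => x.2 - x.1 = p)).card ≤ p := by
              have hinj : ((A ×ˢ Bf).filter (fun x => x.2 - x.1 = p)).card
                  ≤ (Finset.Icc (n + 1 - p) n).card := by
                refine Finset.card_le_card_of_injOn Prod.fst ?_ ?_
                · intro x hx
                  simp only [hA, hBf, Finset.mem_coe, Finset.mem_filter, Finset.mem_product,
                    Finset.mem_Icc] at hx
                  simp only [Finset.mem_coe, Finset.mem_Icc]
                  omega
                · intro x hx y hy hxy
                  simp only [hA, hBf, Finset.coe_filter, Finset.mem_product,
                    Finset.mem_Icc, Set.mem_setOf_eq] at hx hy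
                  have : x.2 = y.2 := by omega
                  exact Prod.ext hxy this
              have : (Finset.Icc (n + 1 - p) n).card ≤ p := by
                rw [Nat.card_Icc]
                omega
              omega
            exact mul_le_mul_of_nonneg_right (by exact_mod_cast hcard) (abs_nonneg _)
        _ ≤ B := hpartial _
    have habs := abs_le.mp hcross
    have han : a n = ∑ j ∈ A, ∑ k ∈ A, γ j k := haeq n
    rw [expand, hblock, hsym]
    linarith [habs.1, han]
  -- nonnegativity
  have ha0 : ∀ n, 0 ≤ a n := fun n => integral_nonneg fun ω => sq_nonneg _
  -- iterate
  have hiter : ∀ n k : ℕ, (2 : ℝ) ^ k * a n - ((2 : ℝ) ^ k - 1) * (2 * B) ≤ a (2 ^ k * n) := by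
    intro n k
    induction k with
    | zero => simp
    | succ k ih =>
      have h2 := key (2 ^ k * n)
      have hidx : 2 ^ (k + 1) * n = 2 * (2 ^ k * n) := by ring
      rw [hidx]
      have e : (2 : ℝ) ^ (k + 1) = 2 * 2 ^ k := by ring
      rw [e]
      linarith
  have hfinal : ∀ n k : ℕ, (2 : ℝ) ^ k * (a n - 2 * B) ≤ a (2 ^ k * n) := by
    intro n k
    have h1 := hiter n k
    nlinarith [hB0, pow_pos (by norm_num : (0:ℝ) < 2) k]
  -- the limit a m / m → 0
  have hlim : Tendsto (fun m : ℕ => a m / (m : ℝ)) atTop (𝓝 0) := by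
    have h1 : Tendsto (fun m : ℕ => (Real.sqrt (a m) / Real.sqrt (m : ℕ)) ^ 2)
        atTop (𝓝 (σ ^ 2)) := hσ.pow 2
    rw [hσ0] at h1
    norm_num at h1
    refine h1.congr' ?_
    filter_upwards [eventually_ge_atTop 1] with m hm
    rw [div_pow, Real.sq_sqrt (ha0 m), Real.sq_sqrt (Nat.cast_nonneg m)]
  refine ⟨2 * B, fun n hn => ?_⟩
  have hnpos : (0 : ℝ) < (n : ℝ) := by exact_mod_cast hn
  have hmono : Tendsto (fun k : ℕ => 2 ^ k * n) atTop atTop := by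
    refine tendsto_atTop_mono (fun k => ?_) tendsto_id
    calc (k : ℕ) ≤ 2 ^ k := (Nat.lt_two_pow_self).le
      _ ≤ 2 ^ k * n := Nat.le_mul_of_pos_right _ (by omega)
  have hsub : Tendsto (fun k : ℕ => a (2 ^ k * n) / ((2 ^ k * n : ℕ) : ℝ)) atTop (𝓝 0) :=
    hlim.comp hmono
  have hge : ∀ k : ℕ, (a n - 2 * B) / (n : ℝ) ≤ a (2 ^ k * n) / ((2 ^ k * n : ℕ) : ℝ) := by
    intro k
    have h1 := hfinal n k
    have hpos : (0 : ℝ) < ((2 ^ k * n : ℕ) : ℝ) := by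
      have : 0 < 2 ^ k * n := by positivity
      exact_mod_cast this
    rw [div_le_div_iff₀ hnpos hpos]
    push_cast
    nlinarith [pow_pos (by norm_num : (0:ℝ) < 2) k, mul_le_mul_of_nonneg_right h1 hnpos.le]
  have hle0 : (a n - 2 * B) / (n : ℝ) ≤ 0 := ge_of_tendsto' hsub hge
  have := mul_le_mul_of_nonneg_right hle0 hnpos.le
  rw [div_mul_cancel₀ _ hnpos.ne', zero_mul] at this
  show a n ≤ 2 * B
  linarith

end
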